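/- Let (T,F) be a graph-labelled tree and let e be a tree-edge of T not incident to a leaf. Let (L_1, L_2) be the bipartition of the leaves of T into the leaf sets of the two components of T − e. Then (L_1, L_2) is a split of the accessibility graph G(T,F). -/

import Mathlib

open SimpleGraph

variable {V : Type}

/-- A vertex of a tree is a leaf if it has exactly one neighbour. -/
def IsLeaf (T : SimpleGraph V) (v : V) : Prop := ∃! w, T.Adj v w

/-- Admissibility of a walk in a graph-labelled tree: at every internal vertex of the
walk, the marker vertices corresponding to the two consecutive tree-edges are adjacent
in the label graph. -/
inductive Admissible (T : SimpleGraph V) (F : ∀ v : V, SimpleGraph (T.neighborSet v)) :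
    ∀ {a b : V}, T.Walk a b → Prop
  | nil {a : V} : Admissible T F (SimpleGraph.Walk.nil : T.Walk a a)
  | single {a b : V} (h : T.Adj a b) :
      Admissible T F (SimpleGraph.Walk.cons h SimpleGraph.Walk.nil)
  | cons {a v b c : V} (h1 : T.Adj a v) (h2 : T.Adj v b) (p : T.Walk b c)
      (hadj : (F v).Adj ⟨a, h1.symm⟩ ⟨b, h2⟩)
      (hp : Admissible T F (SimpleGraph.Walk.cons h2 p)) :
      Admissible T F (SimpleGraph.Walk.cons h1 (SimpleGraph.Walk.cons h2 p))

/-- `b` is accessible from `a`: the (unique) path joining them is admissible. -/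
def Accessible (T : SimpleGraph V) (F : ∀ v : V, SimpleGraph (T.neighborSet v))
    (a b : V) : Prop :=
  ∃ p : T.Walk a b, p.IsPath ∧ Admissible T F p

/-- The accessibility graph of a graph-labelled tree: vertices are the leaves of the
tree, two leaves being adjacent iff one is accessible from the other. -/
def accGraph (T : SimpleGraph V) (F : ∀ v : V, SimpleGraph (T.neighborSet v)) :
    SimpleGraph {v : V // IsLeaf T v} :=
  SimpleGraph.fromRel (fun x y => Accessible T F ↑x ↑y)

/-- The (external) neighbourhood of a set of vertices. -/
def extNbhd (G : SimpleGraph V) (S : Set V) : Set V :=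
  {x | x ∉ S ∧ ∃ y ∈ S, G.Adj x y}

/-- A split of a graph: a bipartition into two parts of size at least two such that
every vertex of `N(A)` is adjacent to every vertex of `N(B)`. -/
def IsSplit (G : SimpleGraph V) (A B : Set V) : Prop :=
  A ∪ B = Set.univ ∧ Disjoint A B ∧ 2 ≤ A.ncard ∧ 2 ≤ B.ncard ∧
    ∀ a ∈ extNbhd G A, ∀ b ∈ extNbhd G B, G.Adj a b

section AuxLemmas

variable {T : SimpleGraph V} {F : ∀ v : V, SimpleGraph (T.neighborSet v)}

lemma Admissible.tail {a b c : V} {h : T.Adj a b} {p : T.Walk b c}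
    (hp : Admissible T F (Walk.cons h p)) : Admissible T F p := by
  cases hp with
  | single h => exact .nil
  | cons h1 h2 p hadj hp => exact hp

lemma Admissible.adj_of_cons_cons {a x b c : V} {h1 : T.Adj a x} {h2 : T.Adj x b} {p : T.Walk b c}
    (hp : Admissible T F (.cons h1 (.cons h2 p))) : (F x).Adj ⟨a, h1.symm⟩ ⟨b, h2⟩ := by
  cases hp with
  | cons _ _ _ hadj _ => exact hadj

lemma admissible_append_cons {a x u b : V} (p : T.Walk a x) (h : T.Adj x u) (r : T.Walk u b)
    (h1 : Admissible T F (p.concat h)) (h2 : Admissible T F (.cons h r)) :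
    Admissible T F (p.append (.cons h r)) := by
  induction p with
  | nil => simpa using h2
  | cons hadj p' ih =>
    rw [Walk.cons_append]
    rw [Walk.concat_cons] at h1
    cases p' with
    | nil =>
      exact Admissible.cons _ _ _ (h1.adj_of_cons_cons) h2
    | cons hadj2 p'' =>
      rw [Walk.cons_append]
      rw [Walk.concat_cons] at h1
      refine Admissible.cons _ _ _ h1.adj_of_cons_cons ?_
      have := ih h h1.tail h2
      rwa [Walk.cons_append] at this

lemma Admissible.reverse {a b : V} {p : T.Walk a b} (hp : Admissible T F p) :
    Admissible T F p.reverse := by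
  induction hp with
  | nil => exact .nil
  | single h => simpa using Admissible.single h.symm
  | @cons a x b c h1 h2 p hadj hp ih =>
    have key : Admissible T F (p.reverse.append (.cons h2.symm (.cons h1.symm .nil))) := by
      refine admissible_append_cons _ _ _ ?_ ?_
      · rw [Walk.concat_eq_append, ← Walk.reverse_cons]
        exact ih
      · exact Admissible.cons _ _ _ (by exact hadj.symm) (Admissible.single h1.symm)
    rw [Walk.reverse_cons, Walk.reverse_cons, ← Walk.append_assoc, Walk.cons_nil_append]
    exact key

lemma Admissible.of_append_left {a b c : V} {p : T.Walk a b} {q : T.Walk b c}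
    (h : Admissible T F (p.append q)) : Admissible T F p := by
  induction p with
  | nil => exact .nil
  | cons h1 p' ih =>
    rw [Walk.cons_append] at h
    cases p' with
    | nil => exact Admissible.single h1
    | cons h2 p'' =>
      rw [Walk.cons_append] at h
      refine Admissible.cons _ _ _ h.adj_of_cons_cons ?_
      exact ih (by rw [Walk.cons_append]; exact h.tail)

lemma reach_side {u v : V} : ∀ {l z : V} (_ : T.Walk l z),
    (T.deleteEdges {s(u,v)}).Reachable l z ∨ (T.deleteEdges {s(u,v)}).Reachable l u ∨
      (T.deleteEdges {s(u,v)}).Reachable l v := by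
  intro l z w
  induction w with
  | nil => exact Or.inl (Reachable.refl _)
  | @cons l' b z' h p ih =>
    by_cases he : s(l', b) = s(u, v)
    · rw [Sym2.eq_iff] at he
      rcases he with ⟨rfl, rfl⟩ | ⟨rfl, rfl⟩
      · exact Or.inr (Or.inl (Reachable.refl _))
      · exact Or.inr (Or.inr (Reachable.refl _))
    · have hadj : (T.deleteEdges {s(u,v)}).Adj l' b := by
        rw [deleteEdges_adj]; exact ⟨h, by simpa using he⟩
      rcases ih with h' | h' | h'
      · exact Or.inl (hadj.reachable.trans h')
      · exact Or.inr (Or.inl (hadj.reachable.trans h'))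
      · exact Or.inr (Or.inr (hadj.reachable.trans h'))

lemma cross_decomp {u v : V} (hnr : ¬ (T.deleteEdges {s(u,v)}).Reachable u v) :
    ∀ {a y : V} (P : T.Walk a y), P.IsPath →
    (T.deleteEdges {s(u,v)}).Reachable a v → (T.deleteEdges {s(u,v)}).Reachable y u →
    ∃ (p1 : T.Walk a v) (hvu : T.Adj v u),
      (∃ q : T.Walk u y, P = p1.append (Walk.cons hvu q)) ∧
      (∀ x ∈ p1.support, (T.deleteEdges {s(u,v)}).Reachable x v) := by
  intro a y P
  induction P with
  | nil =>
    intro _ ha hy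
    exact absurd (hy.symm.trans ha) hnr
  | @cons a b y h P' ih =>
    intro hP ha hy
    by_cases he : s(a, b) = s(u, v)
    · rw [Sym2.eq_iff] at he
      rcases he with ⟨rfl, rfl⟩ | ⟨rfl, rfl⟩
      · exact absurd ha hnr
      · refine ⟨Walk.nil, h, ⟨P', by simp⟩, ?_⟩
        intro x hx
        simp only [Walk.support_nil, List.mem_singleton] at hx
        subst hx; exact Reachable.refl _
    · have hadj : (T.deleteEdges {s(u,v)}).Adj b a := by
        rw [deleteEdges_adj]
        exact ⟨h.symm, by simpa using fun hh => he (Sym2.eq_swap.trans hh)⟩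
      have hb : (T.deleteEdges {s(u,v)}).Reachable b v := hadj.reachable.trans ha
      obtain ⟨p1, hvu, ⟨q, hq⟩, hsupp⟩ := ih hP.of_cons hb hy
      refine ⟨Walk.cons h p1, hvu, ⟨q, by rw [hq, Walk.cons_append]⟩, ?_⟩
      intro x hx
      rw [Walk.support_cons, List.mem_cons] at hx
      rcases hx with rfl | hx
      · exact ha
      · exact hsupp x hx

end AuxLemmas

/-- removing an internal tree-edge `uv` of a graph-labelled tree yields a
bipartition of the leaves that is a split of the accessibility graph. -/
theorem stmt4 [Fintype V] (T : SimpleGraph V) (hT : T.IsTree)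
    (F : ∀ v : V, SimpleGraph (T.neighborSet v))
    (u v : V) (huv : T.Adj u v) (hu : ¬ IsLeaf T u) (hv : ¬ IsLeaf T v)
    (L1 L2 : Set {l : V // IsLeaf T l})
     (hL1 : L1 = {l : {x : V // IsLeaf T x} | (T.deleteEdges {s(u, v)}).Reachable (l : V) u})
     (hL2 : L2 = {l : {x : V // IsLeaf T x} | (T.deleteEdges {s(u, v)}).Reachable (l : V) v})
    (h1 : 2 ≤ L1.ncard) (h2 : 2 ≤ L2.ncard) :
    IsSplit (accGraph T F) L1 L2 := by
  subst hL1 hL2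
  have hnr : ¬ (T.deleteEdges {s(u,v)}).Reachable u v := by
    have hb := (isAcyclic_iff_forall_adj_isBridge.mp hT.IsAcyclic) huv
    rw [isBridge_iff] at hb
    exact hb
  have hdisj : ∀ x : V, (T.deleteEdges {s(u,v)}).Reachable x u →
      (T.deleteEdges {s(u,v)}).Reachable x v → False :=
    fun x hxu hxv => hnr (hxu.symm.trans hxv)
  have hunion : ∀ l : V, (T.deleteEdges {s(u,v)}).Reachable l u ∨
      (T.deleteEdges {s(u,v)}).Reachable l v := by
    intro l
    obtain ⟨w⟩ := hT.isConnected.preconnected l u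
    rcases reach_side (v := v) w with h' | h' | h'
    · exact Or.inl h'
    · exact Or.inl h'
    · exact Or.inr h'
  refine ⟨?_, ?_, h1, h2, ?_⟩
  · ext l
    simp only [Set.mem_union, Set.mem_setOf_eq, Set.mem_univ, iff_true]
    exact hunion ↑l
  · rw [Set.disjoint_left]
    intro l hl1 hl2
    exact hdisj ↑l hl1 hl2
  · rintro a ⟨haL1, y, hyL1, hay⟩ b ⟨hbL2, x, hxL2, hbx⟩
    have haV : (T.deleteEdges {s(u,v)}).Reachable ↑a v := by
      rcases hunion ↑a with h' | h'
      · exact absurd h' haL1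
      · exact h'
    have hbU : (T.deleteEdges {s(u,v)}).Reachable ↑b u := by
      rcases hunion ↑b with h' | h'
      · exact h'
      · exact absurd h' hbL2
    simp only [accGraph, fromRel_adj] at hay hbx
    obtain ⟨hayne, hay⟩ := hay
    obtain ⟨hbxne, hbx⟩ := hbx
    have hay' : Accessible T F ↑a ↑y := by
      rcases hay with h' | h'
      · exact h'
      · obtain ⟨p, hp, hadm⟩ := h'
        exact ⟨p.reverse, hp.reverse, hadm.reverse⟩
    have hbx' : Accessible T F ↑b ↑x := by
      rcases hbx with h' | h'
      · exact h'
      · obtain ⟨p, hp, hadm⟩ := h'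
        exact ⟨p.reverse, hp.reverse, hadm.reverse⟩
    obtain ⟨P, hP, hadmP⟩ := hay'
    obtain ⟨P', hP', hadmP'⟩ := hbx'
    obtain ⟨p1, hvu, ⟨q, hPeq⟩, hsupp1⟩ := cross_decomp hnr P hP haV hyL1
    have hsets : T.deleteEdges {s(v,u)} = T.deleteEdges {s(u,v)} := by rw [Sym2.eq_swap]
    have hnr' : ¬ (T.deleteEdges {s(v,u)}).Reachable v u := by
      rw [hsets]; exact fun h => hnr h.symm
    have hbU' : (T.deleteEdges {s(v,u)}).Reachable ↑b u := by rw [hsets]; exact hbU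
    have hxV' : (T.deleteEdges {s(v,u)}).Reachable ↑x v := by rw [hsets]; exact hxL2
    obtain ⟨r1, huv2, ⟨s1, hP'eq⟩, hsuppb⟩ := cross_decomp hnr' P' hP' hbU' hxV'
    have hsuppb' : ∀ z ∈ r1.support, (T.deleteEdges {s(u,v)}).Reachable z u := by
      intro z hz
      have := hsuppb z hz
      rwa [hsets] at this
    have hadm1 : Admissible T F (p1.concat hvu) := by
      have heq : P = (p1.concat hvu).append q := by
        rw [hPeq, Walk.concat_eq_append, ← Walk.append_assoc, Walk.cons_nil_append]
      rw [heq] at hadmP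
      exact hadmP.of_append_left
    have hadm2 : Admissible T F (r1.concat huv2) := by
      have heq : P' = (r1.concat huv2).append s1 := by
        rw [hP'eq, Walk.concat_eq_append, ← Walk.append_assoc, Walk.cons_nil_append]
      rw [heq] at hadmP'
      exact hadmP'.of_append_left
    have hadm3 : Admissible T F (Walk.cons hvu r1.reverse) := by
      have h3 := hadm2.reverse
      rw [Walk.reverse_concat] at h3
      exact h3
    have admW := admissible_append_cons p1 hvu r1.reverse hadm1 hadm3
    have hp1 : p1.support.Nodup := by
      have hnd := hP.support_nodup
      rw [hPeq, Walk.support_append] at hnd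
      exact hnd.of_append_left
    have hr1 : r1.support.Nodup := by
      have hnd := hP'.support_nodup
      rw [hP'eq, Walk.support_append] at hnd
      exact hnd.of_append_left
    have hWpath : (p1.append (Walk.cons hvu r1.reverse)).IsPath := by
      rw [Walk.isPath_def, Walk.support_append, Walk.support_cons, List.tail_cons]
      refine List.Nodup.append hp1 ?_ ?_
      · rw [Walk.support_reverse]
        exact List.nodup_reverse.mpr hr1
      · intro z hz1 hz2
        rw [Walk.support_reverse, List.mem_reverse] at hz2
        exact hdisj z (hsuppb' z hz2) (hsupp1 z hz1)
    have hne : a ≠ b := by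
      intro hab
      exact hdisj ↑a (hab ▸ hbU) haV
    simp only [accGraph, fromRel_adj]
    exact ⟨hne, Or.inl ⟨_, hWpath, admW⟩⟩
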